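/- If a and b are arrangements in graph G with partition {S_1,...,S_m} and both a and b belong to the same configuration tuple γ (i.e., for every i, a/S_i and b/S_i are in the same configuration c_i of S_i), then there exists a concrete plan in G from a to b. -/

import Mathlib

open scoped Classical

/-- An arrangement of robots `R` on vertices `V`: an injective partial map `V ⇀ R`. -/
abbrev Arrangement (V R : Type) := V → Option R

/-- Injectivity of an arrangement: no robot occupies two vertices. -/
def ArrInj {V R : Type} (a : Arrangement V R) : Prop :=
  ∀ u v r, a u = some r → a v = some r → u = v

/-- A plan-step `(r, u, v)` is applicable if `r` is at `u`, `v` is unoccupied,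
and `(u,v)` is an edge. -/
def Applicable {V R : Type} (G : SimpleGraph V) (a : Arrangement V R)
    (s : R × V × V) : Prop :=
  G.Adj s.2.1 s.2.2 ∧ a s.2.1 = some s.1 ∧ a s.2.2 = none

/-- Applying a plan-step: move the robot from `u` to `v`. -/
noncomputable def applyStep {V R : Type} (a : Arrangement V R) (s : R × V × V) :
    Arrangement V R :=
  fun w => if w = s.2.2 then some s.1 else if w = s.2.1 then none else a w

/-- `IsPlan G P a b`: the sequence of plan-steps `P` is a valid concrete plan in `G`
transforming arrangement `a` into arrangement `b`. -/
def IsPlan {V R : Type} (G : SimpleGraph V) :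
    List (R × V × V) → Arrangement V R → Arrangement V R → Prop
  | [], a, b => a = b
  | s :: P, a, b => Applicable G a s ∧ IsPlan G P (applyStep a s) b

/-- Mutual reachability by plans confined to the vertex set `S` (an induced
subgraph of `G`). -/
def SimIn {V R : Type} (G : SimpleGraph V) (S : Set V) (a b : Arrangement V R) : Prop :=
  (∃ P : List (R × V × V), (∀ s ∈ P, s.2.1 ∈ S ∧ s.2.2 ∈ S) ∧ IsPlan G P a b) ∧
  (∃ Q : List (R × V × V), (∀ s ∈ Q, s.2.1 ∈ S ∧ s.2.2 ∈ S) ∧ IsPlan G Q b a)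

/-- The configuration (equivalence class) of the arrangement `a` within the
subgraph `S` of `G`. -/
def clsIn {V R : Type} (G : SimpleGraph V) (S : Set V) (a : Arrangement V R) :
    Set (Arrangement V R) :=
  {b | SimIn G S a b}

/-- The arrangement `a ⊖ r`: remove robot `r`. -/
noncomputable def removeR {V R : Type} (a : Arrangement V R) (r : R) : Arrangement V R :=
  fun w => if a w = some r then none else a w

/-- The arrangement `a ⊕ (r, v)`: add robot `r` at vertex `v`. -/
noncomputable def addR {V R : Type} (a : Arrangement V R) (r : R) (v : V) :
    Arrangement V R :=
  fun w => if w = v then some r else a w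

/-- `c ⊖ (r, u)`: the set of configurations obtained from configuration `c` by
removing robot `r` exiting via vertex `u`. -/
def ominusC {V R : Type} (G : SimpleGraph V) (S : Set V)
    (c : Set (Arrangement V R)) (r : R) (u : V) : Set (Set (Arrangement V R)) :=
  {C | ∃ a ∈ c, a u = some r ∧ C = clsIn G S (removeR a r)}

/-- `c ⊕ (r, v)`: the set of configurations obtained from configuration `c` by
adding robot `r` entering at vertex `v`. -/
def oplusC {V R : Type} (G : SimpleGraph V) (S : Set V)
    (c : Set (Arrangement V R)) (r : R) (v : V) : Set (Set (Arrangement V R)) :=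
  {C | ∃ a ∈ c, a v = none ∧ C = clsIn G S (addR a r v)}

/-- The restriction `a / S` of an arrangement to a vertex set. -/
noncomputable def restrictArr {V R : Type} (a : Arrangement V R) (S : Set V) :
    Arrangement V R :=
  fun v => if v ∈ S then a v else none

lemma isPlan_append {V R : Type} (G : SimpleGraph V) :
    ∀ (P Q : List (R × V × V)) (a b c : Arrangement V R),
      IsPlan G P a b → IsPlan G Q b c → IsPlan G (P ++ Q) a c := by
  intro P
  induction P with
  | nil =>
      intro Q a b c h1 h2
      simp only [IsPlan] at h1
      subst h1
      simpa using h2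
  | cons s P ih =>
      intro Q a b c h1 h2
      exact ⟨h1.1, ih Q _ _ _ h1.2 h2⟩

lemma isPlan_overlay {V R : Type} (G : SimpleGraph V) (S : Set V) :
    ∀ (P : List (R × V × V)), (∀ s ∈ P, s.2.1 ∈ S ∧ s.2.2 ∈ S) →
    ∀ (x y c : Arrangement V R), IsPlan G P x y →
      IsPlan G P (fun v => if v ∈ S then x v else c v)
        (fun v => if v ∈ S then y v else c v) := by
  intro P
  induction P with
  | nil =>
      intro _ x y c h
      simp only [IsPlan] at h ⊢
      subst h; rfl
  | cons s P ih =>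
      intro hS x y c h
      obtain ⟨⟨hadj, hu, hv⟩, hrest⟩ := h
      have hs := hS s (List.mem_cons_self ..)
      refine ⟨⟨hadj, by simp [hs.1, hu], by simp [hs.2, hv]⟩, ?_⟩
      have heq : (fun v => if v ∈ S then applyStep x s v else c v) =
          applyStep (fun v => if v ∈ S then x v else c v) s := by
        funext w
        by_cases h1 : w = s.2.2
        · subst h1; simp [applyStep, hs.2]
        · by_cases h2 : w = s.2.1
          · subst h2; simp [applyStep, h1, hs.1]
          · simp [applyStep, h1, h2]
      rw [← heq]
      exact ih (fun t ht => hS t (List.mem_cons_of_mem _ ht)) _ _ c hrest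

/-- If `a` and `b` are arrangements in graph `G` with partition `{S 1, ..., S m}`
and both belong to the same configuration tuple (i.e. for every `i`, the induced
arrangements `a / S i` and `b / S i` lie in the same configuration of `S i`,
i.e. are mutually reachable by plans confined to `S i`), then there exists a
concrete plan in `G` from `a` to `b`. -/
theorem plan_of_same_configuration_tuple {V R : Type} {m : ℕ} (G : SimpleGraph V)
    (S : Fin m → Set V)
    (hdisj : ∀ i j, i ≠ j → Disjoint (S i) (S j))
    (hcover : (⋃ i, S i) = Set.univ)
    (a b : Arrangement V R)
    (hsim : ∀ i, SimIn G (S i) (restrictArr a (S i)) (restrictArr b (S i))) :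
    ∃ P : List (R × V × V), IsPlan G P a b := by
  classical
  have hidx : ∀ v : V, ∃ i, v ∈ S i := by
    intro v
    have : v ∈ ⋃ i, S i := by rw [hcover]; trivial
    simpa using this
  choose idx hmem using hidx
  have huniq : ∀ v i, v ∈ S i → idx v = i := by
    intro v i hv
    by_contra h
    exact Set.disjoint_left.mp (hdisj _ _ h) (hmem v) hv
  set h : ℕ → Arrangement V R :=
    fun k v => if (idx v : ℕ) < k then b v else a v with hh
  have key : ∀ k, k ≤ m → ∃ P, IsPlan G P a (h k) := by
    intro k
    induction k with
    | zero =>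
        intro _
        exact ⟨[], by simp only [IsPlan]; funext v; simp [hh]⟩
    | succ k ih =>
        intro hk
        obtain ⟨P, hP⟩ := ih (le_of_lt hk)
        set i : Fin m := ⟨k, hk⟩ with hi
        obtain ⟨⟨Q, hQS, hQ⟩, -⟩ := hsim i
        have hov := isPlan_overlay G (S i) Q hQS _ _ (h k) hQ
        have e1 : (fun v => if v ∈ S i then restrictArr a (S i) v else h k v) = h k := by
          funext v
          by_cases hv : v ∈ S i
          · have : idx v = i := huniq v i hv
            simp [restrictArr, hv, hh, this, hi, show v ∈ S ⟨k, hk⟩ from hv]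
          · simp [hv]
        have e2 : (fun v => if v ∈ S i then restrictArr b (S i) v else h k v) = h (k+1) := by
          funext v
          by_cases hv : v ∈ S i
          · have : idx v = i := huniq v i hv
            simp [restrictArr, hv, hh, this, hi, Nat.lt_succ_iff, show v ∈ S ⟨k, hk⟩ from hv]
          · have hne : (idx v : ℕ) ≠ k := by
              intro hc
              apply hv
              have : idx v = i := Fin.ext hc
              rw [← this]; exact hmem v
            have : (idx v : ℕ) < k + 1 ↔ (idx v : ℕ) < k :=
              ⟨fun hlt => lt_of_le_of_ne (Nat.lt_succ_iff.mp hlt) hne, fun hlt => Nat.lt_succ_of_lt hlt⟩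
            simp [hv, hh, this]
        rw [e1, e2] at hov
        exact ⟨P ++ Q, isPlan_append G P Q _ _ _ hP hov⟩
  obtain ⟨P, hP⟩ := key m le_rfl
  have : h m = b := by
    funext v
    simp [hh, (idx v).isLt]
  rw [this] at hP
  exact ⟨P, hP⟩
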